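/- Let 0 ≤ z < 1, let N ≥ 1, and let x_1, …, x_N be unit vectors in ℝ^n with ⟨x_i, x_j⟩ = z for all i ≠ j (a regular simplex configuration). Then for every unit vector x_0 in ℝ^n there exists an index i ∈ {1,…,N} such that ⟨x_0, x_i⟩ ≥ -√(z + (1-z)/N). -/
import Mathlib


open scoped RealInnerProductSpace BigOperators

/-- For a regular simplex configuration of unit vectors with pairwise inner product `z`,
every unit vector `x₀` has inner product at least `-√(z + (1-z)/N)` with one of them. -/
theorem simplex_inner_bound (n : ℕ) (z : ℝ) (hz0 : 0 ≤ z) (hz1 : z < 1)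
    (N : ℕ) (hN : 1 ≤ N)
    (x : Fin N → EuclideanSpace ℝ (Fin n))
    (hx : ∀ i, ‖x i‖ = 1)
    (hsimplex : ∀ i j, i ≠ j → ⟪x i, x j⟫ = z)
    (x₀ : EuclideanSpace ℝ (Fin n)) (hx₀ : ‖x₀‖ = 1) :
    ∃ i, ⟪x₀, x i⟫ ≥ -Real.sqrt (z + (1 - z) / N) := by
  have hNpos : (0:ℝ) < N := by exact_mod_cast hN
  set c : ℝ := Real.sqrt (z + (1 - z) / N) with hc
  set s : EuclideanSpace ℝ (Fin n) := ∑ i, x i with hs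
  have harg : (0:ℝ) ≤ z + (1 - z) / N := by
    have h1 : (0:ℝ) ≤ (1 - z) / N := div_nonneg (by linarith) hNpos.le
    linarith
  -- ‖s‖² = N² * (z + (1-z)/N)
  have hnorm2 : ‖s‖^2 = (N:ℝ)^2 * (z + (1 - z) / N) := by
    have : ‖s‖^2 = ∑ i, ∑ j, ⟪x i, x j⟫ := by
      rw [hs, ← real_inner_self_eq_norm_sq, inner_sum]
      congr 1; ext i; rw [sum_inner]
      exact Finset.sum_congr rfl fun j _ => real_inner_comm _ _
    rw [this]
    have : ∀ i : Fin N, ∑ j, ⟪x i, x j⟫ = 1 + ((N:ℝ) - 1) * z := by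
      intro i
      rw [← Finset.add_sum_erase _ _ (Finset.mem_univ i)]
      have h1 : ⟪x i, x i⟫ = 1 := by
        rw [real_inner_self_eq_norm_sq, hx i]; norm_num
      rw [h1]
      congr 1
      rw [Finset.sum_congr rfl (fun j hj => hsimplex i j (by
        simp only [Finset.mem_erase] at hj; exact (Ne.symm hj.1)))]
      simp [Finset.card_erase_of_mem, mul_comm]
      rw [Nat.cast_sub hN]; norm_num
    rw [Finset.sum_congr rfl (fun i _ => this i)]
    simp only [Finset.sum_const, Finset.card_univ, Fintype.card_fin, nsmul_eq_mul]
    field_simp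
    ring
  have hnorms : ‖s‖ = (N:ℝ) * c := by
    have : ((N:ℝ) * c)^2 = ‖s‖^2 := by
      rw [hnorm2, mul_pow, hc, Real.sq_sqrt harg]
    have h2 : (0:ℝ) ≤ (N:ℝ) * c := by positivity
    nlinarith [norm_nonneg s]
  have hkey : -((N:ℝ) * c) ≤ ⟪x₀, s⟫ := by
    have h := abs_real_inner_le_norm x₀ s
    have h2 := neg_abs_le (⟪x₀, s⟫)
    have h3 : ‖x₀‖ * ‖s‖ = (N:ℝ) * c := by rw [hx₀, hnorms]; ring
    linarith
  have hsum : ∑ i, ⟪x₀, x i⟫ = ⟪x₀, s⟫ := by rw [hs, inner_sum]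
  have hsumle : ∑ i : Fin N, (-c) ≤ ∑ i, ⟪x₀, x i⟫ := by
    rw [hsum]
    simpa using hkey
  haveI : Nonempty (Fin N) := ⟨⟨0, hN⟩⟩
  obtain ⟨i, _, hi⟩ := Finset.exists_le_of_sum_le
    (Finset.univ_nonempty (α := Fin N)) hsumle
  exact ⟨i, hi⟩
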